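/- Let uv be a cube edge of CCC_n with u = (x,k), v = (y,k), and let z = (z', m) be any vertex. If the k-th coordinate of z' equals the k-th coordinate of y, then d(z,v) < d(z,u); if it equals the k-th coordinate of x, then d(z,u) < d(z,v). -/

import Mathlib

/-- The cube-connected cycles graph `CCC n`: vertices are pairs of a binary
`n`-string and a cycle digit in `ZMod n`; `(x,k)` and `(y,m)` are adjacent iff
either `x = y` and `m = k ± 1` (cycle edge), or `k = m` and `x, y` differ
exactly in the `k`-th coordinate (cube edge). -/
def CCC (n : ℕ) : SimpleGraph ((Fin n → Bool) × ZMod n) :=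
  SimpleGraph.fromRel (fun p q =>
    (p.1 = q.1 ∧ (q.2 = p.2 + 1 ∨ q.2 = p.2 - 1)) ∨
    (p.2 = q.2 ∧ ∀ i : Fin n, (p.1 i ≠ q.1 i ↔ ((i : ℕ) : ZMod n) = p.2)))

namespace CCCaux

variable {n : ℕ}

lemma castInj (hn : 3 ≤ n) {i j : Fin n} (h : ((i : ℕ) : ZMod n) = ((j : ℕ) : ZMod n)) :
    i = j := by
  have h1 : ((i : ℕ) : ZMod n).val = (i : ℕ) := ZMod.val_natCast_of_lt i.isLt
  have h2 : ((j : ℕ) : ZMod n).val = (j : ℕ) := ZMod.val_natCast_of_lt j.isLt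
  exact Fin.ext (by rw [← h1, ← h2, h])

lemma one_ne_zero' (hn : 3 ≤ n) : (1 : ZMod n) ≠ 0 := by
  haveI : Fact (1 < n) := ⟨by omega⟩
  exact one_ne_zero

lemma adj_cycle (hn : 3 ≤ n) (w : Fin n → Bool) (a : ZMod n) :
    (CCC n).Adj (w, a) (w, a + 1) := by
  rw [CCC, SimpleGraph.fromRel_adj]
  refine ⟨?_, Or.inl (Or.inl ⟨rfl, Or.inl rfl⟩)⟩
  intro h
  have : a + 1 = a := (Prod.ext_iff.1 h).2.symm
  exact one_ne_zero' hn (by linear_combination this)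

lemma adj_flip (hn : 3 ≤ n) (w : Fin n → Bool) (j : Fin n) :
    (CCC n).Adj (w, ((j : ℕ) : ZMod n)) (Function.update w j (!w j), ((j : ℕ) : ZMod n)) := by
  rw [CCC, SimpleGraph.fromRel_adj]
  constructor
  · intro h
    have := congrFun (Prod.ext_iff.1 h).1 j
    simp [Function.update_self] at this
  · refine Or.inl (Or.inr ⟨rfl, fun i => ?_⟩)
    by_cases hij : i = j
    · subst hij
      simp [Function.update_self]
    · simp only [Function.update_of_ne hij]
      constructor
      · intro h; exact absurd rfl h
      · intro h; exact absurd (castInj hn h) hij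

lemma reach_cycle (hn : 3 ≤ n) (w : Fin n → Bool) (a b : ZMod n) :
    (CCC n).Reachable (w, a) (w, b) := by
  haveI : NeZero n := ⟨by omega⟩
  have key : ∀ t : ℕ, (CCC n).Reachable (w, a) (w, a + (t : ZMod n)) := by
    intro t
    induction t with
    | zero =>
      rw [Nat.cast_zero, add_zero]
    | succ t ih =>
      refine ih.trans (SimpleGraph.Adj.reachable ?_)
      have := adj_cycle hn w (a + (t : ZMod n))
      convert this using 2
      push_cast
      ring
  have := key (b - a).val
  rwa [ZMod.natCast_val, ZMod.cast_id, add_sub_cancel] at this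

lemma reach_all (hn : 3 ≤ n) (w w' : Fin n → Bool) (a b : ZMod n) :
    (CCC n).Reachable (w, a) (w', b) := by
  haveI : NeZero n := ⟨by omega⟩
  generalize hc : (Finset.univ.filter (fun j => w j ≠ w' j)).card = c
  induction c generalizing w a with
  | zero =>
    have : w = w' := by
      funext j
      by_contra h
      have : j ∈ Finset.univ.filter (fun j => w j ≠ w' j) := by simp [h]
      rw [Finset.card_eq_zero.1 hc] at this
      simp at this
    subst this
    exact reach_cycle hn w a b
  | succ c ih =>
    have hne : (Finset.univ.filter (fun j => w j ≠ w' j)).Nonempty := by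
      rw [← Finset.card_pos, hc]; omega
    obtain ⟨j, hj⟩ := hne
    simp only [Finset.mem_filter] at hj
    have hflip : Function.update w j (!w j) j = w' j := by
      rw [Function.update_self]
      exact (Bool.eq_not_iff.mpr (Ne.symm hj.2)).symm
    refine ((reach_cycle hn w a ((j : ℕ) : ZMod n)).trans
      (SimpleGraph.Adj.reachable (adj_flip hn w j))).trans
      (ih (Function.update w j (!w j)) _ ?_)
    have hsub : Finset.univ.filter (fun i => Function.update w j (!w j) i ≠ w' i)
        = (Finset.univ.filter (fun i => w i ≠ w' i)).erase j := by
      ext i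
      simp only [Finset.mem_filter, Finset.mem_erase, Finset.mem_univ, true_and]
      by_cases hij : i = j
      · subst hij; simp [hflip, hj.2]
      · simp [Function.update_of_ne hij, hij]
    rw [hsub, Finset.card_erase_of_mem
      (by simp only [Finset.mem_filter, Finset.mem_univ, true_and]; exact hj.2), hc]
    omega

/-- Flip coordinate `i`, as a graph endomorphism of `CCC n`. -/
def sigma (i : Fin n) (p : (Fin n → Bool) × ZMod n) : (Fin n → Bool) × ZMod n :=
  (Function.update p.1 i (!p.1 i), p.2)

lemma sigma_invol (i : Fin n) (p : (Fin n → Bool) × ZMod n) : sigma i (sigma i p) = p := by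
  unfold sigma
  refine Prod.ext ?_ rfl
  funext j
  by_cases hij : j = i
  · subst hij; simp
  · simp [Function.update_of_ne hij]

lemma sigma_adj (i : Fin n) {p q : (Fin n → Bool) × ZMod n} (h : (CCC n).Adj p q) :
    (CCC n).Adj (sigma i p) (sigma i q) := by
  rw [CCC, SimpleGraph.fromRel_adj] at h ⊢
  obtain ⟨hne, hrel⟩ := h
  constructor
  · intro h
    exact hne (by rw [← sigma_invol i p, ← sigma_invol i q, h])
  · have key : ∀ a b : (Fin n → Bool) × ZMod n,
        ((a.1 = b.1 ∧ (b.2 = a.2 + 1 ∨ b.2 = a.2 - 1)) ∨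
          (a.2 = b.2 ∧ ∀ j : Fin n, (a.1 j ≠ b.1 j ↔ ((j : ℕ) : ZMod n) = a.2))) →
        (((sigma i a).1 = (sigma i b).1 ∧
            ((sigma i b).2 = (sigma i a).2 + 1 ∨ (sigma i b).2 = (sigma i a).2 - 1)) ∨
          ((sigma i a).2 = (sigma i b).2 ∧ ∀ j : Fin n,
            ((sigma i a).1 j ≠ (sigma i b).1 j ↔ ((j : ℕ) : ZMod n) = (sigma i a).2))) := by
      intro a b hab
      rcases hab with ⟨h1, h2⟩ | ⟨h1, h2⟩
      · exact Or.inl ⟨by rw [sigma, sigma, h1], h2⟩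
      · refine Or.inr ⟨h1, fun j => ?_⟩
        by_cases hij : j = i
        · subst hij
          simpa [sigma, Function.update_self] using h2 j
        · simpa [sigma, Function.update_of_ne hij] using h2 j
    exact hrel.imp (key p q) (key q p)

/-- characterization of an edge that flips coordinate `i`. -/
lemma adj_flip_char (hn : 3 ≤ n) (i : Fin n) {p q : (Fin n → Bool) × ZMod n}
    (h : (CCC n).Adj p q) (hflip : p.1 i ≠ q.1 i) :
    p.2 = ((i : ℕ) : ZMod n) ∧ q = sigma i p := by
  rw [CCC, SimpleGraph.fromRel_adj] at h
  obtain ⟨-, hrel⟩ := h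
  have main : p.2 = q.2 ∧ ∀ j : Fin n, (p.1 j ≠ q.1 j ↔ ((j : ℕ) : ZMod n) = p.2) := by
    rcases hrel with (⟨h1, h2⟩ | ⟨h1, h2⟩) | (⟨h1, h2⟩ | ⟨h1, h2⟩)
    · exact absurd (congrFun h1 i) hflip
    · exact ⟨h1, h2⟩
    · exact absurd (congrFun h1 i).symm hflip
    · exact ⟨h1.symm, fun j => by rw [ne_comm, h2 j, h1]⟩
  obtain ⟨hpq2, hdiff⟩ := main
  have hp2 : ((i : ℕ) : ZMod n) = p.2 := (hdiff i).1 hflip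
  refine ⟨hp2.symm, ?_⟩
  refine Prod.ext ?_ hpq2.symm
  funext j
  by_cases hij : j = i
  · subst hij
    simp only [sigma, Function.update_self]
    exact Bool.eq_not_iff.mpr (Ne.symm hflip)
  · have h' : ¬ (p.1 j ≠ q.1 j) := by
      rw [hdiff j, ← hp2]
      exact fun h => hij (castInj hn h)
    simp only [sigma, Function.update_of_ne hij]
    exact (not_not.1 h').symm

/-- walk surgery: a walk to `(x,k)` from a vertex disagreeing with `x` at coordinate `i`
yields a strictly shorter walk to the flipped vertex. -/
lemma walk_shorter (hn : 3 ≤ n) (i : Fin n) :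
    ∀ {p u : (Fin n → Bool) × ZMod n} (W : (CCC n).Walk p u) (x : Fin n → Bool),
      u = (x, ((i : ℕ) : ZMod n)) → p.1 i ≠ x i →
      ∃ W' : (CCC n).Walk p (Function.update x i (!x i), ((i : ℕ) : ZMod n)),
        W'.length < W.length := by
  intro p u W
  induction W with
  | nil =>
    intro x hu hp
    exact absurd (by rw [hu]) hp
  | @cons p q _ h W ih =>
    intro x hu hp
    by_cases hflip : p.1 i = q.1 i
    · obtain ⟨W', hW'⟩ := ih x hu (hflip ▸ hp)
      exact ⟨SimpleGraph.Walk.cons h W', by simpa using Nat.succ_lt_succ hW'⟩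
    · obtain ⟨hp2, hq⟩ := adj_flip_char hn i h hflip
      subst hu hq
      let f : CCC n →g CCC n := ⟨sigma i, fun ha => sigma_adj i ha⟩
      refine ⟨(W.map f).copy (sigma_invol i p) rfl, ?_⟩
      exact (SimpleGraph.Walk.length_copy _ _ _).trans_lt (by
        rw [SimpleGraph.Walk.length_map, SimpleGraph.Walk.length_cons]
        omega)

lemma dist_lt (hn : 3 ≤ n) (i : Fin n) (x p1 : Fin n → Bool) (p2 : ZMod n)
    (hp : p1 i ≠ x i) :
    (CCC n).dist (p1, p2) (Function.update x i (!x i), ((i : ℕ) : ZMod n))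
      < (CCC n).dist (p1, p2) (x, ((i : ℕ) : ZMod n)) := by
  obtain ⟨W, hW⟩ := (reach_all hn p1 x p2 ((i : ℕ) : ZMod n)).exists_walk_length_eq_dist
  obtain ⟨W', hW'⟩ := walk_shorter hn i W x rfl hp
  calc (CCC n).dist (p1, p2) (Function.update x i (!x i), ((i : ℕ) : ZMod n))
      ≤ W'.length := SimpleGraph.dist_le W'
    _ < W.length := hW'
    _ = _ := hW

end CCCaux

/-- for a cube edge uv = (x,k)(y,k) of CCC_n and any vertex z = (z',m): if the k-th coordinate of z' agrees with y then z is strictly closer to v = (y,k), and if it agrees with x then z is strictly closer to u = (x,k). -/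
theorem CCC_cube_edge_closer (n : ℕ) (hn : 3 ≤ n) (x y : Fin n → Bool) (k : ZMod n)
    (hxy : ∀ i : Fin n, x i ≠ y i ↔ ((i : ℕ) : ZMod n) = k)
    (z' : Fin n → Bool) (m : ZMod n) (i : Fin n) (hi : ((i : ℕ) : ZMod n) = k) :
    (z' i = y i → (CCC n).dist (z', m) (y, k) < (CCC n).dist (z', m) (x, k)) ∧
    (z' i = x i → (CCC n).dist (z', m) (x, k) < (CCC n).dist (z', m) (y, k)) := by
  subst hi
  have hxyi : x i ≠ y i := (hxy i).2 rfl
  have hyx : y = Function.update x i (!x i) := by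
    funext j
    by_cases hij : j = i
    · subst hij
      rw [Function.update_self]
      exact Bool.eq_not_iff.mpr hxyi.symm
    · rw [Function.update_of_ne hij]
      by_contra h
      exact hij (CCCaux.castInj hn ((hxy j).1 (Ne.symm h)))
  have hxy' : x = Function.update y i (!y i) := by
    rw [hyx]
    funext j
    by_cases hij : j = i
    · subst hij; simp
    · simp [Function.update_of_ne hij]
  constructor
  · intro hz
    have hp : z' i ≠ x i := by simpa [hz] using hxyi.symm
    have := CCCaux.dist_lt hn i x z' m hp
    rwa [← hyx] at this
  · intro hz
    have hp : z' i ≠ y i := by simpa [hz] using hxyi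
    have := CCCaux.dist_lt hn i y z' m hp
    rwa [← hxy'] at this
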